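/- Let f : ℕ → ℕ be monotone non-decreasing. The following are equivalent: (1) f is congruence preserving on ⟨ℕ;+⟩ and f(x) ≥ x for all x ∈ ℕ; (2) for every finite subset L ⊆ ℕ, the lattice 𝓛₊(L) is closed under f⁻¹; (3) for every ⟨ℕ;+⟩-recognizable subset L ⊆ ℕ, the lattice 𝓛₊(L) is closed under f⁻¹. -/

import Mathlib

/-- `r` is an additive congruence on ℕ. -/
def IsAddCongN (r : ℕ → ℕ → Prop) : Prop :=
  Equivalence r ∧ ∀ x y x' y', r x y → r x' y' → r (x + x') (y + y')

/-- `f` is congruence preserving on ⟨ℕ;+⟩. -/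
def CongPresN (f : ℕ → ℕ) : Prop :=
  ∀ r : ℕ → ℕ → Prop, IsAddCongN r → ∀ x y, r x y → r (f x) (f y)

/-- `L ⊆ ℕ` is ⟨ℕ;+⟩-recognizable. -/
def RecognizableN (L : Set ℕ) : Prop :=
  ∃ (M : Type) (_ : AddMonoid M) (_ : Finite M) (φ : ℕ →+ M),
    Function.Surjective φ ∧ ∃ T : Set M, L = φ ⁻¹' T

/-- Membership in `𝓛₊(L)`, the smallest family of subsets of ℕ containing `L` and
closed under binary union, binary intersection, and preimages of translations
`X ↦ {n | n + a ∈ X}`. -/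
inductive LatPlusN (L : Set ℕ) : Set ℕ → Prop
  | base : LatPlusN L L
  | union {X Y : Set ℕ} : LatPlusN L X → LatPlusN L Y → LatPlusN L (X ∪ Y)
  | inter {X Y : Set ℕ} : LatPlusN L X → LatPlusN L Y → LatPlusN L (X ∩ Y)
  | shift {X : Set ℕ} (a : ℕ) : LatPlusN L X → LatPlusN L {n | n + a ∈ X}

/-- The lattice `𝓛₊(L)` is closed under `f⁻¹`. -/
def LatPlusNClosedPreimage (L : Set ℕ) (f : ℕ → ℕ) : Prop :=
  ∀ M : Set ℕ, LatPlusN L M → LatPlusN L (f ⁻¹' M)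

lemma lat_biInter {α : Type} (L : Set ℕ) (s : Finset α) (hs : s.Nonempty) (F : α → Set ℕ)
    (h : ∀ a ∈ s, LatPlusN L (F a)) : LatPlusN L (⋂ a ∈ s, F a) := by
  induction hs using Finset.Nonempty.cons_induction with
  | singleton a => simpa using h a (by simp)
  | cons a s ha hs ih =>
      have e : (⋂ x ∈ Finset.cons a s ha, F x) = F a ∩ ⋂ x ∈ s, F x := by simp
      rw [e]
      exact LatPlusN.inter (h a (by simp)) (ih (fun b hb => h b (by simp [hb])))

lemma lat_biUnion {α : Type} (L : Set ℕ) (s : Finset α) (hs : s.Nonempty) (F : α → Set ℕ)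
    (h : ∀ a ∈ s, LatPlusN L (F a)) : LatPlusN L (⋃ a ∈ s, F a) := by
  induction hs using Finset.Nonempty.cons_induction with
  | singleton a => simpa using h a (by simp)
  | cons a s ha hs ih =>
      have e : (⋃ x ∈ Finset.cons a s ha, F x) = F a ∪ ⋃ x ∈ s, F x := by simp
      rw [e]
      exact LatPlusN.union (h a (by simp)) (ih (fun b hb => h b (by simp [hb])))


lemma sepLem (L : Set ℕ) (g : ℕ → ℕ) (hmono : Monotone g) (hge : ∀ x, x ≤ g x)
    (hP : ∀ x d, g x % d = g (x + d) % d)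
    (x n : ℕ) (hx : g x ∈ L) (hn : g n ∉ L) :
    ∃ b, x + b ∈ L ∧ n + b ∉ L := by
  by_contra hc
  push_neg at hc
  rcases lt_trichotomy x n with h | h | h
  · set d := n - x with hd
    have key : ∀ k, g x + k * d ∈ L := by
      intro k; induction k with
      | zero => simpa using hx
      | succ k ih =>
          have hgex := hge x
          have h1 := hc (g x + k * d - x) (by rw [show x + (g x + k * d - x) = g x + k * d by omega]; exact ih)
          rwa [show n + (g x + k * d - x) = g x + (k+1) * d by
            have : (k+1)*d = k*d + d := by ring
            omega] at h1
    have hmod : g x % d = g n % d := by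
      have := hP x d; rwa [show x + d = n by omega] at this
    have hle : g x ≤ g n := hmono (le_of_lt h)
    obtain ⟨k, hk⟩ := (Nat.modEq_iff_dvd' hle).mp hmod
    exact hn (by rw [show g n = g x + k * d by rw [Nat.mul_comm] at hk; omega]; exact key k)
  · exact hn (h ▸ hx)
  · set d := x - n with hd
    have hmod : g n % d = g x % d := by
      have := hP n d; rwa [show n + d = x by omega] at this
    have hle : g n ≤ g x := hmono (le_of_lt h)
    obtain ⟨K, hK⟩ := (Nat.modEq_iff_dvd' hle).mp hmod
    rw [Nat.mul_comm] at hK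
    have key : ∀ i, i ≤ K → g n + (K - i) * d ∈ L := by
      intro i; induction i with
      | zero => intro _; rw [Nat.sub_zero]; rw [show g n + K * d = g x by omega]; exact hx
      | succ i ih =>
          intro hiK
          have hm := ih (by omega)
          have hgen := hge n
          have hdle : d ≤ (K - i) * d := Nat.le_mul_of_pos_left d (by omega)
          have hxle : x ≤ g n + (K - i) * d := by omega
          have h1 := hc (g n + (K - i) * d - x)
            (by rw [show x + (g n + (K - i) * d - x) = g n + (K - i) * d by omega]; exact hm)
          rwa [show n + (g n + (K - i) * d - x) = g n + (K - (i+1)) * d by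
            have e : (K - i) * d = (K - (i+1)) * d + d := by
              rw [show K - i = (K - (i+1)) + 1 by omega]; ring
            omega] at h1
    have := key K le_rfl
    rw [Nat.sub_self, Nat.zero_mul, Nat.add_zero] at this
    exact hn this

lemma coreLem (L : Set ℕ) (q t : ℕ) (hq : 0 < q)
    (hEP : ∀ n, t ≤ n → (n ∈ L ↔ n + q ∈ L))
    (hmin : ∀ p, 0 < p → p < q → ∀ s : ℕ, ¬ ∀ n, s ≤ n → (n ∈ L ↔ n + p ∈ L))
    (g : ℕ → ℕ) (hmono : Monotone g) (hge : ∀ x, x ≤ g x)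
    (hP : ∀ x d, g x % d = g (x + d) % d) :
    LatPlusN L (g ⁻¹' L) := by
  classical
  have aux : ∀ k a, t ≤ a → (a ∈ L ↔ a + k * q ∈ L) := by
    intro k
    induction k with
    | zero => intro a _; simp
    | succ k ih =>
        intro a ha
        rw [show a + (k+1) * q = (a + q) + k * q by ring]
        rw [hEP a ha]
        exact ih (a + q) (by omega)
  have K1 : ∀ a b, t ≤ a → t ≤ b → a % q = b % q → (a ∈ L ↔ b ∈ L) := by
    intro a b ha hb hm
    rcases le_total a b with hab | hab
    · obtain ⟨k, hk⟩ := (Nat.modEq_iff_dvd' hab).mp hm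
      rw [show b = a + k * q by rw [Nat.mul_comm] at hk; omega]
      exact aux k a ha
    · obtain ⟨k, hk⟩ := (Nat.modEq_iff_dvd' hab).mp hm.symm
      rw [show a = b + k * q by rw [Nat.mul_comm] at hk; omega]
      exact (aux k b hb).symm
  have hPq : ∀ a b, a % q = b % q → g a % q = g b % q := by
    have half : ∀ a b, a ≤ b → a % q = b % q → g a % q = g b % q := by
      intro a b hab hm
      obtain ⟨c, hc⟩ := (Nat.modEq_iff_dvd' hab).mp hm
      have h1 : g a % (b - a) = g b % (b - a) := by
        have := hP a (b - a); rwa [show a + (b - a) = b by omega] at this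
      exact Nat.ModEq.of_dvd ⟨c, hc⟩ h1
    intro a b hm
    rcases le_total a b with h | h
    · exact half a b h hm
    · exact (half b a h hm.symm).symm
  have hqt : t + 1 ≤ q * (t + 1) := Nat.le_mul_of_pos_left (t+1) hq
  have hqt' : t ≤ q * t := Nat.le_mul_of_pos_left t hq
  have repmod : ∀ u : ℕ, (q * t + u % q) % q = u % q := by
    intro u
    rw [Nat.add_mod, Nat.mul_mod_right, Nat.mod_mod_of_dvd u dvd_rfl, Nat.zero_add,
      Nat.mod_mod_of_dvd u dvd_rfl]
  have K2 : ∀ n, t ≤ n → (n ∈ L ↔ q * t + n % q ∈ L) := by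
    intro n hn
    exact K1 n (q * t + n % q) hn (by omega) (repmod n).symm
  have hrot : ∀ d, d % q ≠ 0 → ∃ m, (q * t + m % q ∈ L) ∧ q * t + (m + d) % q ∉ L := by
    intro d hd
    by_contra hcon
    push_neg at hcon
    have step : ∀ k m, q * t + m % q ∈ L → q * t + (m + k * d) % q ∈ L := by
      intro k
      induction k with
      | zero => intro m h; simpa using h
      | succ k ih =>
          intro m h
          rw [show m + (k+1) * d = (m + d) + k * d by ring]
          exact ih (m + d) (hcon m h)
    have iff1 : ∀ m, (q * t + m % q ∈ L) ↔ (q * t + (m + d) % q ∈ L) := by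
      intro m
      constructor
      · exact hcon m
      · intro h
        have h2 := step (q - 1) (m + d) h
        have e2 : m + d + (q - 1) * d = m + d * q := by
          have h3 : q - 1 + 1 = q := by omega
          calc m + d + (q-1) * d = m + d * ((q-1) + 1) := by ring
          _ = m + d * q := by rw [h3]
        rwa [e2, Nat.add_mul_mod_self_right] at h2
    have hp0 : 0 < d % q := Nat.pos_of_ne_zero hd
    have hplt : d % q < q := Nat.mod_lt _ hq
    refine hmin (d % q) hp0 hplt t ?_
    intro n hn
    rw [K2 n hn, K2 (n + d % q) (by omega)]
    rw [iff1 n]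
    have e3 : (n + d) % q = (n + d % q) % q := by
      rw [Nat.add_mod n d, Nat.add_mod n (d % q), Nat.mod_mod_of_dvd d dvd_rfl]
    rw [e3]
  have Dlem : 2 ≤ q → ∀ r : ℕ, LatPlusN L {n : ℕ | n % q = r % q} := by
    intro h2 r
    have hrlt : r % q < q := Nat.mod_lt _ hq
    set I : Finset ℕ := (Finset.range q).erase (r % q) with hI
    have hIne : I.Nonempty := by
      refine ⟨if r % q = 0 then 1 else 0, ?_⟩
      by_cases h0 : r % q = 0 <;> simp [hI, h0, Finset.mem_erase, Finset.mem_range] <;> omega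
    have hds : ∀ s ∈ I, (s + q - r % q) % q ≠ 0 := by
      intro s hs h0
      have hs1 : s < q := Finset.mem_range.mp (Finset.mem_of_mem_erase hs)
      have hs2 : s ≠ r % q := Finset.ne_of_mem_erase hs
      obtain ⟨c, hc⟩ := Nat.dvd_of_mod_eq_zero h0
      rcases c with _ | c
      · omega
      rcases c with _ | c
      · omega
      · have h3 : q * 2 ≤ q * (c + 1 + 1) := Nat.mul_le_mul_left q (by omega)
        omega
    set ms : ℕ → ℕ := fun s =>
      if h : (s + q - r % q) % q ≠ 0 then Classical.choose (hrot _ h) else 0 with hms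
    have msspec : ∀ s ∈ I, (q * t + (ms s) % q ∈ L) ∧ q * t + (ms s + (s + q - r % q)) % q ∉ L := by
      intro s hs
      have h := hds s hs
      simp only [hms, dif_pos h]
      exact Classical.choose_spec (hrot _ h)
    set F : ℕ → Set ℕ := fun s => {n : ℕ | n + (q * (t+1) + (ms s + (q - r % q)) % q) ∈ L} with hF
    have key : {n : ℕ | n % q = r % q} = ⋂ s ∈ I, F s := by
      ext n
      simp only [Set.mem_setOf_eq, Set.mem_iInter, hF]
      constructor
      · intro hn s hs
        have hge' : t ≤ n + (q * (t+1) + (ms s + (q - r % q)) % q) := by omega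
        have e : (n + (q * (t+1) + (ms s + (q - r % q)) % q)) % q = (ms s) % q := by
          refine (ZMod.natCast_eq_natCast_iff _ _ _).mp ?_
          have h1 : ((n : ℕ) : ZMod q) = ((r % q : ℕ) : ZMod q) :=
            (ZMod.natCast_eq_natCast_iff _ _ _).mpr
              (hn.trans (Nat.mod_mod_of_dvd r dvd_rfl).symm)
          push_cast [Nat.cast_sub (le_of_lt hrlt), ZMod.natCast_mod, ZMod.natCast_self] at *
          rw [h1]; ring
        refine (K1 _ (q * t + (ms s) % q) hge' (by omega) (by rw [e, repmod])).mpr ?_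
        exact (msspec s hs).1
      · intro hn
        by_contra hne
        set s := n % q with hsdef
        have hsI : s ∈ I := by
          refine Finset.mem_erase.mpr ⟨?_, Finset.mem_range.mpr (Nat.mod_lt _ hq)⟩
          simpa [hsdef] using hne
        have hL := hn s hsI
        have hge' : t ≤ n + (q * (t+1) + (ms s + (q - r % q)) % q) := by omega
        have e : (n + (q * (t+1) + (ms s + (q - r % q)) % q)) % q
            = (ms s + (s + q - r % q)) % q := by
          refine (ZMod.natCast_eq_natCast_iff _ _ _).mp ?_
          have h1 : ((n : ℕ) : ZMod q) = ((s : ℕ) : ZMod q) := by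
            rw [hsdef, ZMod.natCast_mod]
          have hsle : r % q ≤ s + q := by omega
          push_cast [Nat.cast_sub (le_of_lt hrlt), Nat.cast_sub hsle, ZMod.natCast_mod,
            ZMod.natCast_self] at *
          rw [h1]; ring
        have := (K1 _ (q * t + (ms s + (s + q - r % q)) % q) hge' (by omega)
          (by rw [e, repmod])).mp hL
        exact (msspec s hsI).2 this
    rw [key]
    refine lat_biInter L I hIne F (fun s _ => ?_)
    exact LatPlusN.shift _ LatPlusN.base
  -- main construction
  set G : Finset ℕ := (Finset.range (t + q)).filter (fun x => g x ∈ L) with hG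
  set bf : ℕ → ℕ → ℕ := fun x n =>
    if h : g x ∈ L ∧ g n ∉ L then Classical.choose (sepLem L g hmono hge hP x n h.1 h.2)
    else 0 with hbf
  have bfspec : ∀ x n, g x ∈ L → g n ∉ L → (x + bf x n ∈ L ∧ n + bf x n ∉ L) := by
    intro x n h1 h2
    have h : g x ∈ L ∧ g n ∉ L := ⟨h1, h2⟩
    simp only [hbf, dif_pos h]
    exact Classical.choose_spec (sepLem L g hmono hge hP x n h.1 h.2)
  set Fx : ℕ → Finset ℕ := fun x =>
    (Finset.range (t+1)).filter (fun n => n % q = x % q ∧ g n ∉ L) with hFx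
  set Ax : ℕ → Finset ℕ := fun x => insert (g x - x) ((Fx x).image (bf x)) with hAx
  set core : ℕ → Set ℕ := fun x => ⋂ a ∈ Ax x, {n : ℕ | n + a ∈ L} with hcore
  have coremem : ∀ x n, n ∈ core x ↔ ∀ a ∈ Ax x, n + a ∈ L := by
    intro x n; simp only [hcore, Set.mem_iInter, Set.mem_setOf_eq]
  have core_lat : ∀ x, LatPlusN L (core x) := by
    intro x
    exact lat_biInter L (Ax x) ⟨g x - x, by simp [hAx]⟩ _
      (fun a _ => LatPlusN.shift a LatPlusN.base)
  set T : ℕ → Set ℕ := fun x =>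
    if 2 ≤ q then {n : ℕ | n % q = x % q} ∩ core x else core x with hT
  have T_lat : ∀ x, LatPlusN L (T x) := by
    intro x; by_cases h2 : 2 ≤ q
    · simp only [hT, if_pos h2]; exact LatPlusN.inter (Dlem h2 x) (core_lat x)
    · simp only [hT, if_neg h2]; exact core_lat x
  have Tmod : ∀ x n, n ∈ T x → n % q = x % q := by
    intro x n hn
    by_cases h2 : 2 ≤ q
    · simp only [hT, if_pos h2] at hn; exact hn.1
    · have hq1 : q = 1 := by omega
      simp [hq1, Nat.mod_one]
  have Tshift : ∀ x n, n ∈ T x → ∀ a ∈ Ax x, n + a ∈ L := by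
    intro x n hn
    by_cases h2 : 2 ≤ q
    · simp only [hT, if_pos h2] at hn; exact (coremem x n).mp hn.2
    · simp only [hT, if_neg h2] at hn; exact (coremem x n).mp hn
  have Tintro : ∀ x n, n % q = x % q → (∀ a ∈ Ax x, n + a ∈ L) → n ∈ T x := by
    intro x n hmod hsh
    by_cases h2 : 2 ≤ q
    · simp only [hT, if_pos h2]
      exact ⟨hmod, (coremem x n).mpr hsh⟩
    · simp only [hT, if_neg h2]
      exact (coremem x n).mpr hsh
  have core_self : ∀ x, g x ∈ L → ∀ a ∈ Ax x, x + a ∈ L := by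
    intro x hgx a ha
    simp only [hAx, Finset.mem_insert, Finset.mem_image] at ha
    rcases ha with rfl | ⟨n, hnF, rfl⟩
    · rw [show x + (g x - x) = g x by have := hge x; omega]; exact hgx
    · have hnL : g n ∉ L := by
        simp only [hFx, Finset.mem_filter] at hnF; exact hnF.2.2
      exact (bfspec x n hgx hnL).1
  have claim1 : ∀ x, g x ∈ L → T x ⊆ g ⁻¹' L := by
    intro x hgx n hn
    by_contra hbad
    have hmodn := Tmod x n hn
    by_cases hnt : n ≤ t
    · have hnF : n ∈ Fx x := by
        simp only [hFx, Finset.mem_filter, Finset.mem_range]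
        exact ⟨by omega, hmodn, hbad⟩
      have hmem : bf x n ∈ Ax x := by
        simp only [hAx, Finset.mem_insert, Finset.mem_image]
        exact Or.inr ⟨n, hnF, rfl⟩
      exact (bfspec x n hgx hbad).2 (Tshift x n hn _ hmem)
    · push_neg at hnt
      have hc : n + (g x - x) ∈ L := Tshift x n hn (g x - x) (by simp [hAx])
      have hgxx := hge x
      have hmm : g n % q = (n + (g x - x)) % q := by
        have e1 : g n % q = g x % q := hPq n x hmodn
        rw [e1]
        refine (ZMod.natCast_eq_natCast_iff _ _ _).mp ?_
        have h1 : ((n : ℕ) : ZMod q) = ((x : ℕ) : ZMod q) :=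
          (ZMod.natCast_eq_natCast_iff _ _ _).mpr hmodn
        push_cast [Nat.cast_sub hgxx] at *
        rw [h1]; ring
      exact hbad ((K1 (g n) (n + (g x - x)) (le_trans (by omega) (hge n)) (by omega) hmm).mpr hc)
  have claim2 : ∀ y, g y ∈ L → ∃ x ∈ G, y ∈ T x := by
    intro y hy
    by_cases hcase : y < t + q
    · refine ⟨y, ?_, Tintro y y rfl (core_self y hy)⟩
      simp only [hG, Finset.mem_filter, Finset.mem_range]
      exact ⟨hcase, hy⟩
    · push_neg at hcase
      set x := t + (y - t) % q with hx
      have hx1 : t ≤ x := by omega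
      have hx2 : x < t + q := by have := Nat.mod_lt (y - t) hq; omega
      have hyt : t ≤ y := by omega
      have hxy : y % q = x % q := by
        refine (ZMod.natCast_eq_natCast_iff _ _ _).mp ?_
        simp only [hx]
        push_cast [ZMod.natCast_mod, Nat.cast_sub hyt]
        ring
      have hgx : g x ∈ L := by
        have e := hPq x y hxy.symm
        exact (K1 (g x) (g y) (le_trans hx1 (hge x)) (le_trans hyt (hge y)) e).mpr hy
      refine ⟨x, ?_, ?_⟩
      · simp only [hG, Finset.mem_filter, Finset.mem_range]
        exact ⟨hx2, hgx⟩
      · refine Tintro x y hxy (fun a ha => ?_)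
        have hxa : x + a ∈ L := core_self x hgx a ha
        refine (K1 (y + a) (x + a) (by omega) (by omega) ?_).mpr hxa
        rw [Nat.add_mod y a, Nat.add_mod x a, hxy]
  by_cases hGne : G.Nonempty
  · have e : g ⁻¹' L = ⋃ x ∈ G, T x := by
      ext y
      simp only [Set.mem_iUnion, Set.mem_preimage]
      constructor
      · intro hy
        obtain ⟨x, hxG, hyT⟩ := claim2 y hy
        exact ⟨x, hxG, hyT⟩
      · rintro ⟨x, hxG, hyT⟩
        have hgx : g x ∈ L := by
          simp only [hG, Finset.mem_filter] at hxG; exact hxG.2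
        exact claim1 x hgx hyT
    rw [e]
    exact lat_biUnion L G hGne _ (fun x _ => T_lat x)
  · rw [Finset.not_nonempty_iff_eq_empty] at hGne
    have hGemp : ∀ y, g y ∉ L := by
      intro y hy
      obtain ⟨x, hxG, _⟩ := claim2 y hy
      simp [hGne] at hxG
    have hempty : g ⁻¹' L = ∅ := by
      ext y; simp only [Set.mem_preimage, Set.mem_empty_iff_false, iff_false]
      exact hGemp y
    rw [hempty]
    by_cases h2 : 2 ≤ q
    · have e : (∅ : Set ℕ) = {n : ℕ | n % q = 0 % q} ∩ {n : ℕ | n % q = 1 % q} := by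
        ext n
        simp only [Set.mem_empty_iff_false, Set.mem_inter_iff, Set.mem_setOf_eq, false_iff]
        have e0 : 0 % q = 0 := Nat.zero_mod q
        have e1 : 1 % q = 1 := Nat.mod_eq_of_lt h2
        rintro ⟨h0, h1⟩
        omega
      rw [e]
      exact LatPlusN.inter (Dlem h2 0) (Dlem h2 1)
    · have hq1 : q = 1 := by omega
      have htL : t ∉ L := by
        intro htl
        exact hGemp t ((K1 (g t) t (hge t) le_rfl (by simp [hq1, Nat.mod_one])).mpr htl)
      have e : (∅ : Set ℕ) = {n : ℕ | n + t ∈ L} := by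
        ext n
        simp only [Set.mem_empty_iff_false, Set.mem_setOf_eq, false_iff]
        intro hl
        exact htL ((K1 (n + t) t (by omega) le_rfl (by simp [hq1, Nat.mod_one])).mp hl)
      rw [e]
      exact LatPlusN.shift t LatPlusN.base

-- conversion to/from CongPres
lemma congPres_to_P (f : ℕ → ℕ) (hc : CongPresN f) :
    ∀ x d, f x % d = f (x + d) % d := by
  intro x d
  set r : ℕ → ℕ → Prop := fun a b => a = b ∨ (x ≤ a ∧ x ≤ b ∧ a % d = b % d) with hr
  have hcong : IsAddCongN r := by
    constructor
    · constructor
      · intro a; exact Or.inl rfl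
      · intro a b h
        rcases h with h | ⟨h1, h2, h3⟩
        · exact Or.inl h.symm
        · exact Or.inr ⟨h2, h1, h3.symm⟩
      · intro a b c hab hbc
        rcases hab with rfl | ⟨h1, h2, h3⟩
        · exact hbc
        · rcases hbc with rfl | ⟨h4, h5, h6⟩
          · exact Or.inr ⟨h1, h2, h3⟩
          · exact Or.inr ⟨h1, h5, h3.trans h6⟩
    · intro a b a' b' h h'
      rcases h with rfl | ⟨h1, h2, h3⟩
      · rcases h' with rfl | ⟨h4, h5, h6⟩
        · exact Or.inl rfl
        · refine Or.inr ⟨by omega, by omega, ?_⟩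
          rw [Nat.add_mod a a', Nat.add_mod a b', h6]
      · rcases h' with rfl | ⟨h4, h5, h6⟩
        · refine Or.inr ⟨by omega, by omega, ?_⟩
          rw [Nat.add_mod a a', Nat.add_mod b a', h3]
        · refine Or.inr ⟨by omega, by omega, ?_⟩
          rw [Nat.add_mod a a', Nat.add_mod b b', h3, h6]
  have h1 : r x (x + d) := Or.inr ⟨le_rfl, by omega, (Nat.add_mod_right x d).symm⟩
  have h2 := hc r hcong x (x + d) h1
  rcases h2 with h | ⟨_, _, h⟩
  · rw [h]
  · exact h
lemma P_to_congPres (f : ℕ → ℕ) (hmono : Monotone f) (hge : ∀ x, x ≤ f x)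
    (hP : ∀ x d, f x % d = f (x + d) % d) : CongPresN f := by
  intro r hr a b hab
  have half : ∀ a b, a ≤ b → r a b → r (f a) (f b) := by
    intro a b h hab
    set d := b - a with hd
    have chain : ∀ k s, r (a + s) (a + s + k * d) := by
      intro k
      induction k with
      | zero => intro s; rw [show a + s + 0 * d = a + s by ring]; exact hr.1.refl _
      | succ k ih =>
          intro s
          refine hr.1.trans (ih s) ?_
          have step := hr.2 a b (s + k * d) (s + k * d) hab (hr.1.refl _)
          rw [show a + (s + k * d) = a + s + k * d by ring] at step
          rw [show b + (s + k * d) = a + s + (k+1) * d by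
            have : b = a + d := by omega
            rw [this]; ring] at step
          exact step
    have hfab : f a ≤ f b := hmono h
    have hdvd : d ∣ f b - f a := by
      have h1 := hP a d
      rw [show a + d = b by omega] at h1
      exact (Nat.modEq_iff_dvd' hfab).mp h1
    obtain ⟨k, hk⟩ := hdvd
    rw [Nat.mul_comm] at hk
    have h2 := chain k (f a - a)
    have hgea := hge a
    rw [show a + (f a - a) = f a by omega] at h2
    rw [show f a + k * d = f b by omega] at h2
    exact h2
  rcases le_total a b with h | h
  · exact half a b h hab
  · exact hr.1.symm (half b a h (hr.1.symm hab))

-- bounded / invariant lemmas for the reverse direction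
lemma latBound (L : Set ℕ) (k : ℕ) (hL : ∀ m ∈ L, m ≤ k) :
    ∀ X, LatPlusN L X → ∀ m ∈ X, m ≤ k := by
  intro X h
  induction h with
  | base => exact hL
  | union h1 h2 ih1 ih2 => rintro m (hm | hm); exacts [ih1 m hm, ih2 m hm]
  | inter h1 h2 ih1 ih2 => exact fun m hm => ih1 m hm.1
  | shift a h ih => intro m hm; have := ih (m + a) hm; omega

lemma latInv (L : Set ℕ) (d : ℕ) (hL : ∀ n, n + d ∈ L → n ∈ L) :
    ∀ X, LatPlusN L X → ∀ n, n + d ∈ X → n ∈ X := by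
  intro X h
  induction h with
  | base => exact hL
  | union h1 h2 ih1 ih2 => rintro n (hn | hn); exacts [Or.inl (ih1 n hn), Or.inr (ih2 n hn)]
  | inter h1 h2 ih1 ih2 => exact fun n hn => ⟨ih1 n hn.1, ih2 n hn.2⟩
  | shift a h ih =>
      intro n hn
      simp only [Set.mem_setOf_eq] at hn ⊢
      refine ih (n + a) ?_
      rw [show n + a + d = n + d + a by ring]
      exact hn

lemma closed_fin_to_P (f : ℕ → ℕ)
    (h : ∀ L : Set ℕ, L.Finite → LatPlusNClosedPreimage L f) :
    (∀ x, x ≤ f x) ∧ (∀ x d, f x % d = f (x + d) % d) := by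
  constructor
  · intro x
    have h1 := h {f x} (Set.finite_singleton _) {f x} LatPlusN.base
    have h2 := latBound {f x} (f x) (by simp) _ h1 x (by simp)
    exact h2
  · intro x d
    set L : Set ℕ := {m | m ≤ f (x + d) ∧ m % d = f (x + d) % d} with hLdef
    have hfin : L.Finite :=
      Set.Finite.subset (Set.finite_Iic (f (x + d))) (fun m hm => hm.1)
    have hinv : ∀ n, n + d ∈ L → n ∈ L := by
      rintro n ⟨h1, h2⟩
      exact ⟨by omega, by rw [← h2, Nat.add_mod_right]⟩
    have h1 := h L hfin L LatPlusN.base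
    have h2 : x + d ∈ f ⁻¹' L := by
      show f (x + d) ∈ L
      exact ⟨le_rfl, rfl⟩
    have h3 := latInv L d hinv _ h1 x h2
    have h4 : f x ∈ L := h3
    exact h4.2

-- eventual periodicity existence
lemma finite_EP (L : Set ℕ) (hL : L.Finite) :
    ∃ p, 0 < p ∧ ∃ s, ∀ n, s ≤ n → (n ∈ L ↔ n + p ∈ L) := by
  obtain ⟨B, hB⟩ := hL.bddAbove
  refine ⟨1, Nat.one_pos, B + 1, fun n hn => ?_⟩
  constructor
  · intro hmem; have := hB hmem; omega
  · intro hmem; have := hB hmem; omega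

lemma recog_EP (L : Set ℕ) (hL : RecognizableN L) :
    ∃ p, 0 < p ∧ ∃ s, ∀ n, s ≤ n → (n ∈ L ↔ n + p ∈ L) := by
  obtain ⟨M, instM, instF, φ, hsurj, T, rfl⟩ := hL
  obtain ⟨i, j, hne, hij⟩ := Finite.exists_ne_map_eq_of_infinite φ
  rcases Nat.lt_or_ge i j with hlt | hge
  · refine ⟨j - i, by omega, i, fun n hn => ?_⟩
    have key : φ n = φ (n + (j - i)) := by
      have e1 : n + (j - i) = (n - i) + j := by omega
      have e2 : n = (n - i) + i := by omega
      rw [e1, map_add, ← hij, ← map_add, ← e2]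
    simp only [Set.mem_preimage, ← key]
  · have hlt : j < i := by omega
    refine ⟨i - j, by omega, j, fun n hn => ?_⟩
    have key : φ n = φ (n + (i - j)) := by
      have e1 : n + (i - j) = (n - j) + i := by omega
      have e2 : n = (n - j) + j := by omega
      rw [e1, map_add, hij, ← map_add, ← e2]
    simp only [Set.mem_preimage, ← key]

-- finite sets are recognizable
def TruncC (B : ℕ) : Type := {n : ℕ // n ≤ B + 1}

instance TruncC.zero (B : ℕ) : Zero (TruncC B) := ⟨⟨0, by omega⟩⟩
instance TruncC.add (B : ℕ) : Add (TruncC B) := ⟨fun x y => ⟨min (x.1 + y.1) (B + 1), by omega⟩⟩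
instance TruncC.finite (B : ℕ) : Finite (TruncC B) :=
  Set.Finite.to_subtype (Set.finite_Iic (B + 1))

instance truncAddMonoid (B : ℕ) : AddMonoid (TruncC B) where
  add_assoc x y z := by
    apply Subtype.ext
    show min (min (x.1 + y.1) (B+1) + z.1) (B+1) = min (x.1 + min (y.1 + z.1) (B+1)) (B+1)
    omega
  zero_add x := by apply Subtype.ext; show min (0 + x.1) (B+1) = x.1; have := x.2; omega
  add_zero x := by apply Subtype.ext; show min (x.1 + 0) (B+1) = x.1; have := x.2; omega
  nsmul := nsmulRec
  nsmul_zero := fun _ => rfl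
  nsmul_succ := fun n x => rfl

lemma finite_recog (L : Set ℕ) (hL : L.Finite) : RecognizableN L := by
  obtain ⟨B', hB'⟩ := hL.bddAbove
  set B := B' + 1 with hBdef
  have hB : ∀ m ∈ L, m < B := fun m hm => by have := hB' hm; omega
  refine ⟨TruncC B, truncAddMonoid B, TruncC.finite B, {
      toFun := fun n => ⟨min n (B + 1), by omega⟩
      map_zero' := by apply Subtype.ext; show min 0 (B+1) = 0; omega
      map_add' := by
        intro a b
        apply Subtype.ext
        show min (a + b) (B+1) = min (min a (B+1) + min b (B+1)) (B+1)
        omega }, ?_, ?_⟩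
  · intro m
    refine ⟨m.1, Subtype.ext ?_⟩
    show min m.1 (B + 1) = m.1
    have := m.2; omega
  · refine ⟨(fun n => (⟨min n (B + 1), by omega⟩ : TruncC B)) '' L, ?_⟩
    ext n
    simp only [Set.mem_preimage, Set.mem_image]
    constructor
    · intro hn; exact ⟨n, hn, rfl⟩
    · rintro ⟨m, hmL, he⟩
      have hvl : min m (B+1) = min n (B+1) := congrArg Subtype.val he
      have := hB m hmL
      have : m = n := by omega
      exact this ▸ hmL


lemma wrapperLem (L : Set ℕ)
    (hEPex : ∃ p, 0 < p ∧ ∃ s, ∀ n, s ≤ n → (n ∈ L ↔ n + p ∈ L)) :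
    ∀ X, LatPlusN L X → ∀ g : ℕ → ℕ, Monotone g → (∀ x, x ≤ g x) →
      (∀ x d, g x % d = g (x + d) % d) → LatPlusN L (g ⁻¹' X) := by
  classical
  have hbase : ∀ g : ℕ → ℕ, Monotone g → (∀ x, x ≤ g x) →
      (∀ x d, g x % d = g (x + d) % d) → LatPlusN L (g ⁻¹' L) := by
    intro g h1 h2 h3
    obtain ⟨hq0, s, hs⟩ := Nat.find_spec hEPex
    refine coreLem L (Nat.find hEPex) s hq0 hs ?_ g h1 h2 h3
    intro p hp0 hpq s' hs'
    exact Nat.find_min hEPex hpq ⟨hp0, s', hs'⟩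
  intro X hX
  induction hX with
  | base => exact hbase
  | union hx hy ihx ihy =>
      intro g h1 h2 h3
      rw [Set.preimage_union]
      exact LatPlusN.union (ihx g h1 h2 h3) (ihy g h1 h2 h3)
  | inter hx hy ihx ihy =>
      intro g h1 h2 h3
      rw [Set.preimage_inter]
      exact LatPlusN.inter (ihx g h1 h2 h3) (ihy g h1 h2 h3)
  | @shift X a hx ih =>
      intro g h1 h2 h3
      have e : g ⁻¹' {n | n + a ∈ X} = (fun x => g x + a) ⁻¹' X := rfl
      rw [e]
      refine ih (fun x => g x + a) ?_ ?_ ?_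
      · intro u v huv
        dsimp
        exact Nat.add_le_add_right (h1 huv) a
      · intro x; have := h2 x; omega
      · intro x d; rw [Nat.add_mod (g x) a, Nat.add_mod (g (x+d)) a, h3 x d]

theorem stmt7 (f : ℕ → ℕ) (hf : Monotone f) :
    ((CongPresN f ∧ ∀ x, x ≤ f x) ↔
        ∀ L : Set ℕ, L.Finite → LatPlusNClosedPreimage L f) ∧
    ((CongPresN f ∧ ∀ x, x ≤ f x) ↔
        ∀ L : Set ℕ, RecognizableN L → LatPlusNClosedPreimage L f) := by
  have dir1 : (CongPresN f ∧ ∀ x, x ≤ f x) → ∀ L : Set ℕ,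
      (∃ p, 0 < p ∧ ∃ s, ∀ n, s ≤ n → (n ∈ L ↔ n + p ∈ L)) →
      LatPlusNClosedPreimage L f := by
    rintro ⟨hc, hge⟩ L hEP M hM
    exact wrapperLem L hEP M hM f hf hge (congPres_to_P f hc)
  constructor
  · constructor
    · intro h L hL
      exact dir1 h L (finite_EP L hL)
    · intro h
      obtain ⟨hge, hP⟩ := closed_fin_to_P f h
      exact ⟨P_to_congPres f hf hge hP, hge⟩
  · constructor
    · intro h L hL
      exact dir1 h L (recog_EP L hL)
    · intro h
      have h2 : ∀ L : Set ℕ, L.Finite → LatPlusNClosedPreimage L f :=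
        fun L hL => h L (finite_recog L hL)
      obtain ⟨hge, hP⟩ := closed_fin_to_P f h2
      exact ⟨P_to_congPres f hf hge hP, hge⟩
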